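/- Let Ω ⊂ ℝⁿ be bounded, {u_j}_{j=1}^k an L²(Ω)-orthonormal family, φ̂_j the Fourier transforms of their zero extensions, and h(z) := ∑_{j=1}^k |φ̂_j(z)|². Then |∇h(z)| ≤ 2(2π)^{-n} √(V(Ω) I(Ω)) for every z ∈ ℝⁿ, where V(Ω) is the volume and I(Ω) = ∫_Ω |x|² dx the moment of inertia of Ω (center of mass at the origin). -/

import Mathlib

open MeasureTheory Set


-- auxiliary: derivative of ‖f w‖^2 for f : H → ℂ
private lemma hasFDerivAt_normSq_comp {H : Type*} [NormedAddCommGroup H]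
    [NormedSpace ℝ H] {f : H → ℂ} {f' : H →L[ℝ] ℂ} {z : H}
    (hf : HasFDerivAt f f' z) :
    HasFDerivAt (fun w => ‖f w‖ ^ 2)
      ((2 : ℝ) • (Complex.reCLM.comp (((starRingEnd ℂ) (f z)) • f'))) z := by
  have hre : HasFDerivAt (fun w => (f w).re) (Complex.reCLM.comp f') z :=
    Complex.reCLM.hasFDerivAt.comp z hf
  have him : HasFDerivAt (fun w => (f w).im) (Complex.imCLM.comp f') z :=
    Complex.imCLM.hasFDerivAt.comp z hf
  have h := (hre.mul hre).add (him.mul him)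
  have heq : (fun w => ‖f w‖ ^ 2)
      = fun w => (f w).re * (f w).re + (f w).im * (f w).im := by
    funext w
    rw [Complex.sq_norm, Complex.normSq_apply]
  rw [heq]
  refine HasFDerivAt.congr_fderiv h ?_
  ext w
  simp [Complex.mul_re, ContinuousLinearMap.smul_apply, smul_eq_mul]
  ring

private lemma finiteOn {n : ℕ} {Ω : Set (EuclideanSpace ℝ (Fin n))}
    (hbd : Bornology.IsBounded Ω) : IsFiniteMeasure (volume.restrict Ω) :=
  ⟨by rw [Measure.restrict_apply_univ]; exact hbd.measure_lt_top⟩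

private lemma memℒp_of_continuous {n : ℕ} {Ω : Set (EuclideanSpace ℝ (Fin n))}
    (hΩ : MeasurableSet Ω) (hbd : Bornology.IsBounded Ω) {E : Type*}
    [NormedAddCommGroup E] (p : ENNReal) (f : EuclideanSpace ℝ (Fin n) → E)
    (hf : Continuous f) : MemLp f p (volume.restrict Ω) := by
  haveI := finiteOn hbd
  obtain ⟨R, hR⟩ := hbd.subset_closedBall 0
  obtain ⟨C, hC⟩ :=
    (isCompact_closedBall (0 : EuclideanSpace ℝ (Fin n)) R).exists_bound_of_continuousOn
      hf.continuousOn
  exact MemLp.of_bound hf.aestronglyMeasurable C <|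
    (ae_restrict_mem hΩ).mono fun x hx => hC x (hR hx)

private lemma integrable_of_continuous {n : ℕ} {Ω : Set (EuclideanSpace ℝ (Fin n))}
    (hΩ : MeasurableSet Ω) (hbd : Bornology.IsBounded Ω) {E : Type*}
    [NormedAddCommGroup E] (f : EuclideanSpace ℝ (Fin n) → E)
    (hf : Continuous f) : Integrable f (volume.restrict Ω) :=
  memLp_one_iff_integrable.mp (memℒp_of_continuous hΩ hbd 1 f hf)

-- derivative of the integrand in w
private lemma hasFDerivAt_integrand {n : ℕ} (u : EuclideanSpace ℝ (Fin n) → ℝ)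
    (x w : EuclideanSpace ℝ (Fin n)) :
    HasFDerivAt (fun w' => (u x : ℂ) * Complex.exp (Complex.I * ((inner ℝ x w' : ℝ) : ℂ)))
      ((u x : ℂ) • (Complex.exp (Complex.I * ((inner ℝ x w : ℝ) : ℂ)) •
        (Complex.I • (Complex.ofRealCLM.comp (innerSL ℝ x))))) w := by
  have h1 : HasFDerivAt (fun w' : EuclideanSpace ℝ (Fin n) => (inner ℝ x w' : ℝ))
      (innerSL ℝ x) w := (innerSL ℝ x).hasFDerivAt
  have h2 : HasFDerivAt (fun w' : EuclideanSpace ℝ (Fin n) => ((inner ℝ x w' : ℝ) : ℂ))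
      (Complex.ofRealCLM.comp (innerSL ℝ x)) w :=
    Complex.ofRealCLM.hasFDerivAt.comp w h1
  exact ((h2.const_mul Complex.I).cexp).const_mul _

-- norm bound for that derivative
private lemma norm_integrand_deriv_le {n : ℕ} (u : EuclideanSpace ℝ (Fin n) → ℝ)
    (x w : EuclideanSpace ℝ (Fin n)) :
    ‖(u x : ℂ) • (Complex.exp (Complex.I * ((inner ℝ x w : ℝ) : ℂ)) •
        (Complex.I • (Complex.ofRealCLM.comp (innerSL ℝ x))))‖ ≤ |u x| * ‖x‖ := by
  have hM : ‖Complex.ofRealCLM.comp (innerSL ℝ x)‖ ≤ ‖x‖ := by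
    refine ContinuousLinearMap.opNorm_le_bound _ (norm_nonneg x) fun y => ?_
    simp only [ContinuousLinearMap.coe_comp', Function.comp_apply, innerSL_apply_apply,
      Complex.ofRealCLM_apply, Complex.norm_real]
    exact (abs_real_inner_le_norm x y).trans le_rfl
  have hexp : ‖Complex.exp (Complex.I * ((inner ℝ x w : ℝ) : ℂ))‖ = 1 := by
    rw [Complex.norm_exp]
    simp
  refine ContinuousLinearMap.opNorm_le_bound _ (by positivity) fun y => ?_
  simp only [ContinuousLinearMap.smul_apply, ContinuousLinearMap.coe_comp',
    Function.comp_apply, innerSL_apply_apply, Complex.ofRealCLM_apply, smul_eq_mul]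
  rw [norm_mul, norm_mul, norm_mul, hexp, Complex.norm_I, Complex.norm_real,
    Complex.norm_real, Real.norm_eq_abs, Real.norm_eq_abs, one_mul, one_mul]
  calc |u x| * |inner ℝ x y| ≤ |u x| * (‖x‖ * ‖y‖) :=
        mul_le_mul_of_nonneg_left (abs_real_inner_le_norm x y) (abs_nonneg _)
    _ = |u x| * ‖x‖ * ‖y‖ := by ring


/-- The Fourier transform of the extension by zero of `u : Ω → ℝ`. -/
noncomputable def phihat {n : ℕ} (Ω : Set (EuclideanSpace ℝ (Fin n)))
    (u : EuclideanSpace ℝ (Fin n) → ℝ) (z : EuclideanSpace ℝ (Fin n)) : ℂ :=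
  (2 * Real.pi) ^ (-((n : ℝ) / 2)) •
    ∫ x in Ω, (u x : ℂ) * Complex.exp (Complex.I * ((inner ℝ x z : ℝ) : ℂ))

set_option maxHeartbeats 1000000 in
/-- Gradient bound (2.14) for `h(z) = ∑_{j=1}^k |φ̂_j(z)|²`. -/
theorem gradient_h_bound (n k : ℕ) (Ω : Set (EuclideanSpace ℝ (Fin n)))
    (hΩ : MeasurableSet Ω) (hbd : Bornology.IsBounded Ω)
    (hcm : (∫ x in Ω, x : EuclideanSpace ℝ (Fin n)) = 0)
    (u : ℕ → EuclideanSpace ℝ (Fin n) → ℝ) (hcont : ∀ j, Continuous (u j))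
    (hortho : ∀ i j, ∫ x in Ω, u i x * u j x = if i = j then (1 : ℝ) else 0)
    (z : EuclideanSpace ℝ (Fin n)) :
    ‖fderiv ℝ (fun w => ∑ j ∈ Finset.range k, ‖phihat Ω (u j) w‖ ^ 2) z‖ ≤
      2 * (2 * Real.pi) ^ (-(n : ℝ)) *
        Real.sqrt ((volume Ω).toReal * ∫ x in Ω, ‖x‖ ^ 2) := by
  classical
  haveI : IsFiniteMeasure (volume.restrict Ω) := finiteOn hbd
  set c : ℝ := (2 * Real.pi) ^ (-((n : ℝ) / 2)) with hc
  have hc0 : 0 < c := Real.rpow_pos_of_pos (by positivity) _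
  obtain ⟨R, hR⟩ := hbd.subset_closedBall 0
  have hcontInner : ∀ w : EuclideanSpace ℝ (Fin n),
      Continuous fun x : EuclideanSpace ℝ (Fin n) => (inner ℝ x w : ℝ) :=
    fun w => continuous_id.inner continuous_const
  have hconte : ∀ w, Continuous fun x : EuclideanSpace ℝ (Fin n) =>
      Complex.exp (Complex.I * ((inner ℝ x w : ℝ) : ℂ)) := fun w =>
    Complex.continuous_exp.comp (continuous_const.mul
      (Complex.continuous_ofReal.comp (hcontInner w)))
  -- the "direction density" g w x
  set g : EuclideanSpace ℝ (Fin n) → EuclideanSpace ℝ (Fin n) → ℂ :=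
    fun w x => Complex.exp (Complex.I * ((inner ℝ x z : ℝ) : ℂ)) *
      (Complex.I * ((inner ℝ x w : ℝ) : ℂ)) with hg
  -- derivative of phihat with formula for its applications
  have hT : ∀ j, ∃ T : EuclideanSpace ℝ (Fin n) →L[ℝ] ℂ,
      HasFDerivAt (phihat Ω (u j)) (c • T) z ∧
      ∀ w, T w = ∫ x in Ω, (u j x : ℂ) * g w x := by
    intro j
    obtain ⟨C, hC⟩ := (isCompact_closedBall (0 : EuclideanSpace ℝ (Fin n)) R)
      |>.exists_bound_of_continuousOn (hcont j).continuousOn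
    set A : EuclideanSpace ℝ (Fin n) → EuclideanSpace ℝ (Fin n) →L[ℝ] ℂ :=
      fun x => (u j x : ℂ) • (Complex.exp (Complex.I * ((inner ℝ x z : ℝ) : ℂ)) •
        (Complex.I • (Complex.ofRealCLM.comp (innerSL ℝ x)))) with hA
    have hAcont : Continuous A :=
      (Complex.continuous_ofReal.comp (hcont j)).smul ((hconte z).smul
        ((continuous_const.clm_comp (innerSL ℝ).continuous).const_smul Complex.I))
    have hAint : Integrable A (volume.restrict Ω) :=
      integrable_of_continuous hΩ hbd A hAcont
    refine ⟨∫ x in Ω, A x, ?_, ?_⟩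
    · have hcore : HasFDerivAt
          (fun w => ∫ x in Ω, (u j x : ℂ) * Complex.exp (Complex.I * ((inner ℝ x w : ℝ) : ℂ)))
          (∫ x in Ω, A x) z := by
        refine hasFDerivAt_integral_of_dominated_of_fderiv_le (Metric.ball_mem_nhds z one_pos)
          (Filter.Eventually.of_forall fun w => Continuous.aestronglyMeasurable ?_)
          (integrable_of_continuous hΩ hbd _ ?_) hAcont.aestronglyMeasurable
          (bound := fun _ => C * R) ?_ (integrable_const _)
          (Filter.Eventually.of_forall fun x w _ => hasFDerivAt_integrand (u j) x w)
        · exact (Complex.continuous_ofReal.comp (hcont j)).mul (hconte w)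
        · exact (Complex.continuous_ofReal.comp (hcont j)).mul (hconte z)
        · filter_upwards [ae_restrict_mem hΩ] with x hx w _
          refine (norm_integrand_deriv_le (u j) x w).trans ?_
          have h1 : |u j x| ≤ C := hC x (hR hx)
          have h2 : ‖x‖ ≤ R := mem_closedBall_zero_iff.mp (hR hx)
          exact mul_le_mul h1 h2 (norm_nonneg x) ((abs_nonneg _).trans h1)
      exact hcore.const_smul c
    · intro w
      rw [ContinuousLinearMap.integral_apply hAint]
      refine integral_congr_ae (Filter.Eventually.of_forall fun x => ?_)
      simp only [hA, hg, ContinuousLinearMap.smul_apply, ContinuousLinearMap.coe_comp',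
        Function.comp_apply, innerSL_apply_apply, Complex.ofRealCLM_apply, smul_eq_mul]
  choose T hTd hTa using hT
  -- L² structure
  have hmemu : ∀ j, MemLp (fun x => (u j x : ℂ)) 2 (volume.restrict Ω) := fun j =>
    memℒp_of_continuous hΩ hbd 2 _ (Complex.continuous_ofReal.comp (hcont j))
  set v : ℕ → Lp ℂ 2 (volume.restrict Ω) := fun j => (hmemu j).toLp _ with hv
  have honv : Orthonormal ℂ v := by
    rw [orthonormal_iff_ite]
    intro i j
    rw [MeasureTheory.L2.inner_def]
    have : (∫ x, (inner ℂ ((v i : _ → ℂ) x) ((v j : _ → ℂ) x) : ℂ) ∂(volume.restrict Ω))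
        = ∫ x in Ω, ((u i x * u j x : ℝ) : ℂ) := by
      refine integral_congr_ae ?_
      filter_upwards [(hmemu i).coeFn_toLp, (hmemu j).coeFn_toLp] with x h1 h2
      rw [h1, h2, RCLike.inner_apply]
      push_cast
      rw [Complex.conj_ofReal]
      ring
    rw [this]
    rw [show (∫ x in Ω, ((u i x * u j x : ℝ) : ℂ)) = ((∫ x in Ω, u i x * u j x : ℝ) : ℂ)
      from integral_ofReal, hortho i j]
    split <;> norm_num
  have hmeme : MemLp (fun x => Complex.exp (Complex.I * ((inner ℝ x z : ℝ) : ℂ))) 2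
      (volume.restrict Ω) := memℒp_of_continuous hΩ hbd 2 _ (hconte z)
  set E : Lp ℂ 2 (volume.restrict Ω) := hmeme.toLp _ with hE
  have hmemg : ∀ w, MemLp (g w) 2 (volume.restrict Ω) := fun w =>
    memℒp_of_continuous hΩ hbd 2 _ ((hconte z).mul (continuous_const.mul
      (Complex.continuous_ofReal.comp (hcontInner w))))
  set G : EuclideanSpace ℝ (Fin n) → Lp ℂ 2 (volume.restrict Ω) :=
    fun w => (hmemg w).toLp _ with hG
  -- identification of phihat and T with inner products
  have hφ : ∀ j, phihat Ω (u j) z = c • (inner ℂ (v j) E : ℂ) := by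
    intro j
    rw [phihat, ← hc]
    congr 1
    rw [MeasureTheory.L2.inner_def]
    refine (integral_congr_ae ?_).symm
    filter_upwards [(hmemu j).coeFn_toLp, hmeme.coeFn_toLp] with x h1 h2
    rw [h1, h2, RCLike.inner_apply, Complex.conj_ofReal, mul_comm]
  have hTinner : ∀ j w, T j w = (inner ℂ (v j) (G w) : ℂ) := by
    intro j w
    rw [hTa j w]
    rw [MeasureTheory.L2.inner_def]
    refine (integral_congr_ae ?_).symm
    filter_upwards [(hmemu j).coeFn_toLp, (hmemg w).coeFn_toLp] with x h1 h2
    rw [h1, h2, RCLike.inner_apply, Complex.conj_ofReal, mul_comm]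
  -- norm of E
  have hEnorm : ‖E‖ ^ 2 = (volume Ω).toReal := by
    rw [← inner_self_eq_norm_sq (𝕜 := ℂ)]
    have h1 : (inner ℂ E E : ℂ) = ∫ _x in Ω, (1 : ℂ) := by
      rw [MeasureTheory.L2.inner_def]
      refine integral_congr_ae ?_
      filter_upwards [hmeme.coeFn_toLp] with x h
      rw [h, RCLike.inner_apply, ← Complex.exp_conj, ← Complex.exp_add]
      rw [map_mul, Complex.conj_I, Complex.conj_ofReal]
      ring_nf
      exact Complex.exp_zero
    rw [h1, setIntegral_const]
    simp
    rfl
  -- norm of G w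
  have hGnorm : ∀ w, ‖G w‖ ^ 2 ≤ (∫ x in Ω, ‖x‖ ^ 2) * ‖w‖ ^ 2 := by
    intro w
    rw [← inner_self_eq_norm_sq (𝕜 := ℂ)]
    have h1 : (inner ℂ (G w) (G w) : ℂ) = ∫ x in Ω, ((‖g w x‖ ^ 2 : ℝ) : ℂ) := by
      rw [MeasureTheory.L2.inner_def]
      refine integral_congr_ae ?_
      filter_upwards [(hmemg w).coeFn_toLp] with x h
      rw [h, RCLike.inner_apply, Complex.mul_conj, Complex.normSq_eq_norm_sq]
    rw [h1, show (∫ x in Ω, ((‖g w x‖ ^ 2 : ℝ) : ℂ)) = ((∫ x in Ω, ‖g w x‖ ^ 2 : ℝ) : ℂ)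
      from integral_ofReal]
    show (((∫ x in Ω, ‖g w x‖ ^ 2 : ℝ) : ℂ)).re ≤ _
    rw [Complex.ofReal_re]
    have hgle : ∀ x, ‖g w x‖ ^ 2 ≤ ‖x‖ ^ 2 * ‖w‖ ^ 2 := by
      intro x
      have hgx : ‖g w x‖ = |(inner ℝ x w : ℝ)| := by
        simp only [hg, norm_mul, Complex.norm_I, Complex.norm_real, Real.norm_eq_abs]
        have : ‖Complex.exp (Complex.I * ((inner ℝ x z : ℝ) : ℂ))‖ = 1 := by
          rw [Complex.norm_exp]; simp
        rw [this]; ring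
      rw [hgx, ← mul_pow]
      exact pow_le_pow_left₀ (abs_nonneg _) (abs_real_inner_le_norm x w) 2
    calc ∫ x in Ω, ‖g w x‖ ^ 2
        ≤ ∫ x in Ω, ‖x‖ ^ 2 * ‖w‖ ^ 2 := by
          refine integral_mono ?_ ?_ hgle
          · exact integrable_of_continuous hΩ hbd _
              ((((hconte z).mul (continuous_const.mul
                (Complex.continuous_ofReal.comp (hcontInner w)))).norm).pow 2)
          · exact integrable_of_continuous hΩ hbd _ ((continuous_norm.pow 2).mul continuous_const)
      _ = (∫ x in Ω, ‖x‖ ^ 2) * ‖w‖ ^ 2 := integral_mul_const _ _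
  -- Bessel
  have hBE : ∑ j ∈ Finset.range k, ‖(inner ℂ (v j) E : ℂ)‖ ^ 2 ≤ (volume Ω).toReal :=
    (honv.sum_inner_products_le E).trans_eq hEnorm
  have hBG : ∀ w, ∑ j ∈ Finset.range k, ‖(inner ℂ (v j) (G w) : ℂ)‖ ^ 2 ≤
      (∫ x in Ω, ‖x‖ ^ 2) * ‖w‖ ^ 2 :=
    fun w => (honv.sum_inner_products_le (G w)).trans (hGnorm w)
  have hI0 : 0 ≤ ∫ x in Ω, ‖x‖ ^ 2 := setIntegral_nonneg hΩ fun x _ => by positivity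
  have hV0 : (0 : ℝ) ≤ (volume Ω).toReal := ENNReal.toReal_nonneg
  -- the derivative of the sum
  have hsum : HasFDerivAt (fun w => ∑ j ∈ Finset.range k, ‖phihat Ω (u j) w‖ ^ 2)
      (∑ j ∈ Finset.range k, (2 : ℝ) • (Complex.reCLM.comp
        ((starRingEnd ℂ (phihat Ω (u j) z)) • (c • T j)))) z :=
    HasFDerivAt.fun_sum fun j _ => hasFDerivAt_normSq_comp (hTd j)
  rw [hsum.fderiv]
  have hcc : c * c = (2 * Real.pi) ^ (-(n : ℝ)) := by
    rw [hc, ← Real.rpow_add (by positivity)]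
    congr 1
    ring
  refine ContinuousLinearMap.opNorm_le_bound _ (by positivity) fun w => ?_
  have happ : (∑ j ∈ Finset.range k, (2 : ℝ) • (Complex.reCLM.comp
        ((starRingEnd ℂ (phihat Ω (u j) z)) • (c • T j)))) w
      = ∑ j ∈ Finset.range k,
          2 * ((starRingEnd ℂ (phihat Ω (u j) z)) * (c • T j w)).re := by
    simp [ContinuousLinearMap.sum_apply, ContinuousLinearMap.smul_apply, smul_eq_mul]
  rw [happ, Real.norm_eq_abs]
  have hterm : ∀ j, |2 * ((starRingEnd ℂ (phihat Ω (u j) z)) * (c • T j w)).re|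
      ≤ 2 * (c * c) * (‖(inner ℂ (v j) E : ℂ)‖ * ‖(inner ℂ (v j) (G w) : ℂ)‖) := by
    intro j
    rw [abs_mul, abs_two]
    have h1 : |((starRingEnd ℂ (phihat Ω (u j) z)) * (c • T j w)).re|
        ≤ ‖phihat Ω (u j) z‖ * (c * ‖T j w‖) := by
      refine (Complex.abs_re_le_norm _).trans ?_
      rw [norm_mul, RCLike.norm_conj, norm_smul,
        Real.norm_eq_abs, abs_of_pos hc0]
    have h2 : ‖phihat Ω (u j) z‖ = c * ‖(inner ℂ (v j) E : ℂ)‖ := by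
      rw [hφ j, norm_smul, Real.norm_eq_abs, abs_of_pos hc0]
    rw [h2, hTinner j w] at h1
    calc 2 * |((starRingEnd ℂ (phihat Ω (u j) z)) * (c • T j w)).re|
        ≤ 2 * (c * ‖(inner ℂ (v j) E : ℂ)‖ * (c * ‖(inner ℂ (v j) (G w) : ℂ)‖)) := by
          rw [hTinner j w]
          exact mul_le_mul_of_nonneg_left h1 (by norm_num)
      _ = 2 * (c * c) * (‖(inner ℂ (v j) E : ℂ)‖ * ‖(inner ℂ (v j) (G w) : ℂ)‖) := by ring
  have hS0 : (0 : ℝ) ≤ ∑ j ∈ Finset.range k,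
      ‖(inner ℂ (v j) E : ℂ)‖ * ‖(inner ℂ (v j) (G w) : ℂ)‖ :=
    Finset.sum_nonneg fun j _ => mul_nonneg (norm_nonneg _) (norm_nonneg _)
  have hCS : ∑ j ∈ Finset.range k, ‖(inner ℂ (v j) E : ℂ)‖ * ‖(inner ℂ (v j) (G w) : ℂ)‖
      ≤ Real.sqrt ((volume Ω).toReal * ∫ x in Ω, ‖x‖ ^ 2) * ‖w‖ := by
    have hsq : (∑ j ∈ Finset.range k,
        ‖(inner ℂ (v j) E : ℂ)‖ * ‖(inner ℂ (v j) (G w) : ℂ)‖) ^ 2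
        ≤ (volume Ω).toReal * ((∫ x in Ω, ‖x‖ ^ 2) * ‖w‖ ^ 2) := by
      refine (Finset.sum_mul_sq_le_sq_mul_sq _ _ _).trans ?_
      exact mul_le_mul hBE (hBG w)
        (Finset.sum_nonneg fun j _ => by positivity) hV0
    calc (∑ j ∈ Finset.range k, ‖(inner ℂ (v j) E : ℂ)‖ * ‖(inner ℂ (v j) (G w) : ℂ)‖)
        = Real.sqrt ((∑ j ∈ Finset.range k,
            ‖(inner ℂ (v j) E : ℂ)‖ * ‖(inner ℂ (v j) (G w) : ℂ)‖) ^ 2) :=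
          (Real.sqrt_sq hS0).symm
      _ ≤ Real.sqrt ((volume Ω).toReal * ((∫ x in Ω, ‖x‖ ^ 2) * ‖w‖ ^ 2)) :=
          Real.sqrt_le_sqrt hsq
      _ = Real.sqrt ((volume Ω).toReal * ∫ x in Ω, ‖x‖ ^ 2) * ‖w‖ := by
          rw [show (volume Ω).toReal * ((∫ x in Ω, ‖x‖ ^ 2) * ‖w‖ ^ 2)
              = ((volume Ω).toReal * ∫ x in Ω, ‖x‖ ^ 2) * ‖w‖ ^ 2 by ring,
            Real.sqrt_mul (by positivity) (‖w‖ ^ 2), Real.sqrt_sq (norm_nonneg w)]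
  calc |∑ j ∈ Finset.range k,
        2 * ((starRingEnd ℂ (phihat Ω (u j) z)) * (c • T j w)).re|
      ≤ ∑ j ∈ Finset.range k,
          |2 * ((starRingEnd ℂ (phihat Ω (u j) z)) * (c • T j w)).re| :=
        Finset.abs_sum_le_sum_abs _ _
    _ ≤ ∑ j ∈ Finset.range k, 2 * (c * c) *
          (‖(inner ℂ (v j) E : ℂ)‖ * ‖(inner ℂ (v j) (G w) : ℂ)‖) :=
        Finset.sum_le_sum fun j _ => hterm j
    _ = 2 * (c * c) * ∑ j ∈ Finset.range k,
          ‖(inner ℂ (v j) E : ℂ)‖ * ‖(inner ℂ (v j) (G w) : ℂ)‖ := by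
        rw [Finset.mul_sum]
    _ ≤ 2 * (c * c) * (Real.sqrt ((volume Ω).toReal * ∫ x in Ω, ‖x‖ ^ 2) * ‖w‖) := by
        refine mul_le_mul_of_nonneg_left hCS (by positivity)
    _ = 2 * (2 * Real.pi) ^ (-(n : ℝ)) *
          Real.sqrt ((volume Ω).toReal * ∫ x in Ω, ‖x‖ ^ 2) * ‖w‖ := by
        rw [hcc]; ring
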